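/- The set 𝒯₀ satisfies conditions (i) and (iii) of a triangle presentation compatible with λ₀: for all x, y ∈ Lˣ, there exists z̄ ∈ P with (x̄, ȳ, z̄) ∈ 𝒯₀ if and only if Tr(y/x) = 0; and for all x, y ∈ Lˣ there is at most one z̄ ∈ P with (x̄, ȳ, z̄) ∈ 𝒯₀. -/

import Mathlib

/-- The image of `Kˣ` in `Fˣ`, as a subgroup of `Fˣ`. -/
def baseUnits (K F : Type*) [Field K] [Field F] [Algebra K F] : Subgroup Fˣ :=
  (Units.map (algebraMap K F).toMonoidHom).range

/-- The quotient group `P = Fˣ/Kˣ`. -/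
abbrev ProjPts (K F : Type*) [Field K] [Field F] [Algebra K F] : Type _ :=
  Fˣ ⧸ baseUnits K F

/-- The class in `P = Fˣ/Kˣ` of a unit `x ∈ Fˣ`. -/
def pbar {K F : Type*} [Field K] [Field F] [Algebra K F] (x : Fˣ) : ProjPts K F :=
  QuotientGroup.mk x

/-- The triangle presentation of Tits type:
`𝒯₀ = {(x̄, x̄·ξ̄, x̄·ξ̄^(q+1)) : x, ξ ∈ Fˣ, Tr(ξ) = 0}`. -/
def titsT0 (q : ℕ) (K F : Type*) [Field K] [Field F] [Algebra K F] :
    Set (ProjPts K F × ProjPts K F × ProjPts K F) :=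
  {t | ∃ x ξ : Fˣ, Algebra.trace K F (ξ : F) = 0 ∧
        t = (pbar x, pbar x * pbar ξ, pbar x * pbar ξ ^ (q + 1))}

lemma pbar_eq_iff {K F : Type*} [Field K] [Field F] [Algebra K F] (a b : Fˣ) :
    pbar (K := K) a = pbar b ↔ ∃ c : Kˣ, (b : F) = algebraMap K F (c : K) * a := by
  rw [pbar, pbar, QuotientGroup.eq]
  constructor
  · rintro ⟨c, hc⟩
    refine ⟨c, ?_⟩
    have := congrArg (Units.val) hc
    simp at this
    rw [this]
    field_simp
  · rintro ⟨c, hc⟩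
    refine ⟨c, Units.ext ?_⟩
    simp [hc, mul_comm, mul_assoc]

lemma pbar_mul {K F : Type*} [Field K] [Field F] [Algebra K F] (a b : Fˣ) :
    pbar (K := K) a * pbar b = pbar (a * b) := rfl

lemma pbar_pow {K F : Type*} [Field K] [Field F] [Algebra K F] (a : Fˣ) (n : ℕ) :
    pbar (K := K) a ^ n = pbar (a ^ n) := by
  induction n with
  | zero => rfl
  | succ n ih => rw [pow_succ, pow_succ, ih, pbar_mul]

example : True := trivial

lemma trace_mul_algebraMap {K F : Type*} [Field K] [Field F] [Algebra K F]
    (c : K) (ξ : F) :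
    Algebra.trace K F (algebraMap K F c * ξ) = c * Algebra.trace K F ξ := by
  rw [← Algebra.smul_def, map_smul, smul_eq_mul]

theorem stmt16 (q : ℕ) (hq : IsPrimePow q) (K F : Type*) [Field K] [Field F]
    [Algebra K F] [Fintype K] (hK : Fintype.card K = q)
    (hd : Module.finrank K F = 3) :
    (∀ x y : Fˣ,
        (∃ z : ProjPts K F, (pbar x, pbar y, z) ∈ titsT0 q K F) ↔
          Algebra.trace K F ((y / x : Fˣ) : F) = 0) ∧
      ∀ (x y : Fˣ) (z z' : ProjPts K F),
        (pbar x, pbar y, z) ∈ titsT0 q K F → (pbar x, pbar y, z') ∈ titsT0 q K F →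
          z = z' := by
  have key : ∀ (x y : Fˣ) (z : ProjPts K F), (pbar x, pbar y, z) ∈ titsT0 q K F →
      Algebra.trace K F ((y / x : Fˣ) : F) = 0 ∧ z = pbar x * pbar (y / x) ^ (q + 1) := by
    intro x y z hmem
    obtain ⟨x', ξ, hξ, heq⟩ := hmem
    obtain ⟨h1, h2, h3⟩ : pbar x = pbar x' ∧ pbar y = pbar x' * pbar ξ ∧
        z = pbar x' * pbar ξ ^ (q + 1) := by
      refine ⟨congrArg (·.1) heq, congrArg (·.2.1) heq, congrArg (·.2.2) heq⟩
    rw [pbar_mul] at h2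
    obtain ⟨c, hc⟩ := (pbar_eq_iff x x').mp h1
    obtain ⟨d, hd'⟩ := (pbar_eq_iff y (x' * ξ)).mp h2
    -- (y/x : F) = ξ * algebraMap (c * d⁻¹)
    have hx : (x : F) ≠ 0 := x.ne_zero
    have hdne : (d : K) ≠ 0 := d.ne_zero
    have hyx : ((y / x : Fˣ) : F) = algebraMap K F ((c : K) * (d⁻¹ : Kˣ)) * ξ := by
      push_cast
      have hy : (y : F) = (algebraMap K F (d : K))⁻¹ * ((x' : F) * ξ) := by
        field_simp at hd' ⊢
        rw [← hd', Units.val_mul]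
      rw [hy, hc]
      have hφd : (algebraMap K F) (d : K) ≠ 0 := by
        simp [hdne]
      field_simp
    have htr : Algebra.trace K F ((y / x : Fˣ) : F) = 0 := by
      rw [hyx, trace_mul_algebraMap, hξ, mul_zero]
    refine ⟨htr, ?_⟩
    have hpx : pbar (K := K) ξ = pbar (y / x) := by
      rw [pbar_eq_iff]
      exact ⟨c * d⁻¹, by push_cast at hyx ⊢; rw [hyx]⟩
    rw [h3, h1, hpx]
  constructor
  · intro x y
    constructor
    · rintro ⟨z, hz⟩
      exact (key x y z hz).1
    · intro htr
      refine ⟨pbar x * pbar (y / x) ^ (q + 1), x, y / x, htr, ?_⟩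
      have : pbar (K := K) x * pbar (y / x) = pbar y := by
        rw [pbar_mul]; congr 1; exact Units.ext (by push_cast; field_simp)
      rw [this]
  · intro x y z z' h h'
    rw [(key x y z h).2, (key x y z' h').2]
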